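/- Let f : [a,b] → ℝ be continuously differentiable with f(a) = 0 and 0 < f'(x) < 1 for all x ∈ (a,b), and let p > 1. Then 2^(1−p) · p · ∫_a^b f(x)^(2p−1) dx < (∫_a^b f(x) dx)^p. -/
import Mathlib

open Set intervalIntegral MeasureTheory

theorem qi_strict_inequality (a b p : ℝ) (hab : a < b) (hp : 1 < p) (f f' : ℝ → ℝ)
    (hfc : ContinuousOn f (Set.Icc a b))
    (hfd : ∀ x ∈ Set.Ioo a b, HasDerivAt f (f' x) x)
    (hf'c : ContinuousOn f' (Set.Icc a b))
    (hfa : f a = 0) (hf' : ∀ x ∈ Set.Ioo a b, 0 < f' x ∧ f' x < 1) :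
    2 ^ (1 - p) * p * (∫ x in a..b, f x ^ (2 * p - 1)) <
      (∫ x in a..b, f x) ^ p := by
  have hp0 : 0 < p := by linarith
  have h2p1 : (0:ℝ) < 2 * p - 1 := by linarith
  -- f is strictly monotone on Icc a b
  have hmono : StrictMonoOn f (Icc a b) := by
    apply strictMonoOn_of_deriv_pos (convex_Icc a b) hfc
    intro x hx
    rw [interior_Icc] at hx
    rw [(hfd x hx).deriv]
    exact (hf' x hx).1
  have hfpos : ∀ x ∈ Ioc a b, 0 < f x := by
    intro x hx
    have := hmono (left_mem_Icc.2 hab.le) ⟨hx.1.le, hx.2⟩ hx.1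
    rwa [hfa] at this
  have hfnonneg : ∀ x ∈ Icc a b, 0 ≤ f x := by
    intro x hx
    rcases eq_or_lt_of_le hx.1 with h | h
    · rw [← h, hfa]
    · exact (hfpos x ⟨h, hx.2⟩).le
  -- continuity of f^(2p-1)
  have hgc : ContinuousOn (fun t => f t ^ (2 * p - 1)) (Icc a b) :=
    hfc.rpow_const (fun x _ => Or.inr h2p1.le)
  -- interval integrability
  have hfint : ∀ x ∈ Icc a b, IntervalIntegrable f volume a x := by
    intro x hx
    exact (hfc.mono (Icc_subset_Icc le_rfl hx.2)).intervalIntegrable_of_Icc hx.1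
  have hgint : ∀ x ∈ Icc a b, IntervalIntegrable (fun t => f t ^ (2 * p - 1)) volume a x := by
    intro x hx
    exact (hgc.mono (Icc_subset_Icc le_rfl hx.2)).intervalIntegrable_of_Icc hx.1
  set I : ℝ → ℝ := fun x => ∫ t in a..x, f t with hI_def
  set J : ℝ → ℝ := fun x => ∫ t in a..x, f t ^ (2 * p - 1) with hJ_def
  -- continuity of primitives
  have hIcont : ContinuousOn I (Icc a b) := by
    have := continuousOn_primitive_interval (μ := volume) (f := f) (a := a) (b := b)
      (by rw [uIcc_of_le hab.le]; exact hfc.integrableOn_Icc)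
    rwa [uIcc_of_le hab.le] at this
  have hJcont : ContinuousOn J (Icc a b) := by
    have := continuousOn_primitive_interval (μ := volume)
      (f := fun t => f t ^ (2 * p - 1)) (a := a) (b := b)
      (by rw [uIcc_of_le hab.le]; exact hgc.integrableOn_Icc)
    rwa [uIcc_of_le hab.le] at this
  -- derivatives of primitives on Ioo
  have hfcIoo : ContinuousOn f (Ioo a b) := hfc.mono Ioo_subset_Icc_self
  have hgcIoo : ContinuousOn (fun t => f t ^ (2 * p - 1)) (Ioo a b) :=
    hgc.mono Ioo_subset_Icc_self
  have hI' : ∀ x ∈ Ioo a b, HasDerivAt I (f x) x := by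
    intro x hx
    exact integral_hasDerivAt_right (hfint x ⟨hx.1.le, hx.2.le⟩)
      (hfcIoo.stronglyMeasurableAtFilter isOpen_Ioo x hx)
      (hfcIoo.continuousAt (isOpen_Ioo.mem_nhds hx))
  have hJ' : ∀ x ∈ Ioo a b, HasDerivAt J (f x ^ (2 * p - 1)) x := by
    intro x hx
    exact integral_hasDerivAt_right (hgint x ⟨hx.1.le, hx.2.le⟩)
      (hgcIoo.stronglyMeasurableAtFilter isOpen_Ioo x hx)
      (hgcIoo.continuousAt (isOpen_Ioo.mem_nhds hx))
  -- positivity of I on Ioo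
  have hIpos : ∀ x ∈ Ioo a b, 0 < I x := by
    intro x hx
    apply intervalIntegral_pos_of_pos_on (hfint x ⟨hx.1.le, hx.2.le⟩)
    · intro t ht
      exact hfpos t ⟨ht.1, ht.2.le.trans hx.2.le⟩
    · exact hx.1
  -- key: f x ^ 2 / 2 < I x on Ioo
  have hkey : ∀ x ∈ Ioo a b, f x ^ (2:ℕ) / 2 < I x := by
    have hgm : StrictMonoOn (fun x => I x - f x ^ (2:ℕ) / 2) (Icc a b) := by
      apply strictMonoOn_of_deriv_pos (convex_Icc a b)
      · exact hIcont.sub ((hfc.pow 2).div_const 2)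
      · intro x hx
        rw [interior_Icc] at hx
        have hd : HasDerivAt (fun x => I x - f x ^ (2:ℕ) / 2)
            (f x - (2 * f x ^ 1 * f' x) / 2) x :=
          (hI' x hx).sub (((hfd x hx).pow 2).div_const 2)
        rw [hd.deriv]
        have h1 := hfpos x ⟨hx.1, hx.2.le⟩
        have h2 := (hf' x hx).2
        nlinarith
    intro x hx
    have := hgm (left_mem_Icc.2 hab.le) ⟨hx.1.le, hx.2.le⟩ hx.1
    simp only [hI_def] at this ⊢
    rw [intervalIntegral.integral_same, hfa] at this
    simp at this
    linarith
  -- F = I^p - 2^(1-p) p J is strictly monotone on Icc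
  have hFm : StrictMonoOn (fun x => I x ^ p - 2 ^ (1 - p) * p * J x) (Icc a b) := by
    apply strictMonoOn_of_deriv_pos (convex_Icc a b)
    · exact (hIcont.rpow_const (fun x _ => Or.inr hp0.le)).sub
        (continuousOn_const.mul hJcont)
    · intro x hx
      rw [interior_Icc] at hx
      have hIx := hIpos x hx
      have hd : HasDerivAt (fun x => I x ^ p - 2 ^ (1 - p) * p * J x)
          (f x * p * I x ^ (p - 1) - 2 ^ (1 - p) * p * f x ^ (2 * p - 1)) x :=
        ((hI' x hx).rpow_const (Or.inl hIx.ne')).sub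
          ((hJ' x hx).const_mul (2 ^ (1 - p) * p))
      rw [hd.deriv]
      have hfx := hfpos x ⟨hx.1, hx.2.le⟩
      have h1 : (f x ^ (2:ℕ)) ^ (p - 1) = f x ^ (2 * (p - 1)) := by
        rw [← Real.rpow_natCast (f x) 2, ← Real.rpow_mul hfx.le]
        norm_num
      have h3 : f x ^ (2 * (p - 1)) * f x = f x ^ (2 * p - 1) := by
        rw [← Real.rpow_add_one hfx.ne']
        congr 1
        ring
      have hrw : (f x ^ (2:ℕ) / 2) ^ (p - 1) * f x = 2 ^ (1 - p) * f x ^ (2 * p - 1) := by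
        rw [Real.div_rpow (by positivity) (by norm_num), h1, div_mul_eq_mul_div, h3]
        rw [show (1:ℝ) - p = -(p-1) by ring, Real.rpow_neg (by norm_num : (0:ℝ) ≤ 2)]
        ring
      have hlt : (f x ^ (2:ℕ) / 2) ^ (p - 1) < I x ^ (p - 1) :=
        Real.rpow_lt_rpow (by positivity) (hkey x hx) (by linarith)
      have hlt2 : (2:ℝ) ^ (1 - p) * f x ^ (2 * p - 1) < I x ^ (p - 1) * f x :=
        hrw ▸ mul_lt_mul_of_pos_right hlt hfx
      nlinarith [mul_lt_mul_of_pos_left hlt2 hp0]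
  have hF := hFm (left_mem_Icc.2 hab.le) (right_mem_Icc.2 hab.le) hab
  simp only [hI_def, hJ_def, intervalIntegral.integral_same] at hF
  rw [Real.zero_rpow hp0.ne'] at hF
  simp at hF
  linarith
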